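/- Let X be a metrizable space, s : X̂ → X a continuous bijection from a finer topology, and {X_M}_{M∈ℕ} an increasing family of subsets of X, each closed, on which s is a homeomorphism. Let μ_i → μ weakly on X, and suppose the sequence is uniformly separating: for every ε > 0 there is M with μ_i(X_M) > 1 − ε for all i. Then the pushforwards s^{-1}_*μ_i converge weakly to s^{-1}_*μ on X̂. -/

import Mathlib

open Set Topology MeasureTheory Filter

/-- Let `s : X̂ → X` be a continuous bijection from a finer topology
on a metrizable space, with an increasing family of closed sets `X_M ⊆ X` on which `s`
is a homeomorphism. If probability measures `μ_i → μ` weakly on `X` and the sequence is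
uniformly separating (for every `ε > 0` there is `M` with `μ_i(X_M) > 1 − ε` for all
`i`), then the pushforwards `s⁻¹_* μ_i` converge weakly to `s⁻¹_* μ` on `X̂`. -/
theorem uniformly_separating_weak_convergence {Xh X : Type*} [Nonempty Xh]
    [TopologicalSpace Xh] [TopologicalSpace X] [TopologicalSpace.MetrizableSpace X]
    [MeasurableSpace Xh] [BorelSpace Xh] [MeasurableSpace X] [BorelSpace X]
    (s : Xh → X) (hcont : Continuous s) (hbij : Function.Bijective s)
    (hinv : Measurable (Function.invFun s))
    (XM : ℕ → Set X) (hclosed : ∀ M, IsClosed (XM M)) (hmono : Monotone XM)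
    (hemb : ∀ M, Topology.IsEmbedding ((s ⁻¹' XM M).restrict s))
    (μs : ℕ → Measure X) (μ : Measure X)
    [∀ i, IsProbabilityMeasure (μs i)] [IsProbabilityMeasure μ]
    (hweak : ∀ f : X → ℝ, Continuous f → (∃ C, ∀ x, |f x| ≤ C) →
      Tendsto (fun i => ∫ x, f x ∂(μs i)) atTop (nhds (∫ x, f x ∂μ)))
    (hsep : ∀ ε > (0:ℝ), ∃ M, ∀ i, 1 - ε < ((μs i) (XM M)).toReal) :
    ∀ f : Xh → ℝ, Continuous f → (∃ C, ∀ x, |f x| ≤ C) →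
      Tendsto (fun i => ∫ y, f y ∂((μs i).map (Function.invFun s))) atTop
        (nhds (∫ y, f y ∂(μ.map (Function.invFun s)))) := by
  intro f hf hfb
  obtain ⟨C, hC⟩ := hfb
  have hC0 : 0 ≤ C := le_trans (abs_nonneg _) (hC (Classical.arbitrary Xh))
  haveI : NormalSpace X := by
    letI := TopologicalSpace.metrizableSpaceMetric X; infer_instance
  have hfsm : StronglyMeasurable f := hf.stronglyMeasurable
  set g : X → ℝ := fun x => f (Function.invFun s x) with hg_def
  have hgsm : StronglyMeasurable g := hfsm.comp_measurable hinv
  have hgb : ∀ x, |g x| ≤ C := fun x => hC _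
  have hgint : ∀ (ν : Measure X) [IsProbabilityMeasure ν], Integrable g ν := by
    intro ν _
    exact (integrable_const C).mono' hgsm.aestronglyMeasurable
      (Eventually.of_forall fun x => by simpa [Real.norm_eq_abs] using hgb x)
  have hmap : ∀ (ν : Measure X), ∫ y, f y ∂(ν.map (Function.invFun s)) = ∫ x, g x ∂ν := by
    intro ν
    exact integral_map hinv.aemeasurable hfsm.aestronglyMeasurable
  simp only [hmap]
  -- weak convergence as `ProbabilityMeasure` convergence, to apply the portmanteau theorem
  set P : ℕ → ProbabilityMeasure X := fun i => ⟨μs i, inferInstance⟩ with hP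
  set Q : ProbabilityMeasure X := ⟨μ, inferInstance⟩ with hQ
  have hT : Tendsto P atTop (nhds Q) := by
    rw [ProbabilityMeasure.tendsto_iff_forall_integral_tendsto]
    intro φ
    exact hweak φ φ.continuous ⟨‖φ‖, fun x => by
      simpa [Real.norm_eq_abs] using φ.norm_coe_le_norm x⟩
  -- the limit measure also has nearly full mass on some `XM M`
  have hμM : ∀ ε > (0:ℝ), ∃ M, (∀ i, 1 - ε < ((μs i) (XM M)).toReal) ∧
      1 - ε ≤ (μ (XM M)).toReal := by
    intro ε hε
    obtain ⟨M, hM⟩ := hsep ε hε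
    refine ⟨M, hM, ?_⟩
    have hls : (atTop.limsup fun i => (P i : Measure X) (XM M)) ≤ (Q : Measure X) (XM M) :=
      ProbabilityMeasure.limsup_measure_closed_le_of_tendsto hT (hclosed M)
    have hlb : ENNReal.ofReal (1 - ε) ≤ atTop.limsup fun i => (P i : Measure X) (XM M) := by
      refine le_limsup_of_frequently_le
        (Frequently.of_forall fun i => ENNReal.ofReal_le_of_le_toReal (hM i).le) ?_
      isBoundedDefault
    have hle : ENNReal.ofReal (1 - ε) ≤ μ (XM M) := le_trans hlb hls
    rcases le_or_gt (1 - ε) 0 with h | h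
    · exact le_trans h ENNReal.toReal_nonneg
    · exact (ENNReal.ofReal_le_iff_le_toReal (measure_ne_top μ _)).mp hle
  rw [Metric.tendsto_atTop]
  intro ε₀ hε₀
  set ε : ℝ := ε₀ / (4 * C + 2) with hε_def
  have hε : 0 < ε := div_pos hε₀ (by linarith)
  obtain ⟨M, hMi, hMμ⟩ := hμM ε hε
  -- build a bounded continuous extension `G'` of `g` restricted to `XM M`
  set F : ↥(s ⁻¹' XM M) → X := (s ⁻¹' XM M).restrict s with hF_def
  have hF : Topology.IsEmbedding F := hemb M
  have hrange : Set.range F = XM M := by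
    ext y
    constructor
    · rintro ⟨⟨z, hz⟩, rfl⟩; exact hz
    · intro hy
      obtain ⟨z, rfl⟩ := hbij.2 y
      exact ⟨⟨z, hy⟩, rfl⟩
  set e := Topology.IsEmbedding.toHomeomorph hF with he
  set ψ : ↥(XM M) → ↥(s ⁻¹' XM M) :=
    fun y => e.symm (Homeomorph.setCongr hrange.symm y) with hψ_def
  have hψc : Continuous ψ :=
    e.symm.continuous.comp (Homeomorph.setCongr hrange.symm).continuous
  have hψ : ∀ y : ↥(XM M), g (y : X) = f ((ψ y : Xh)) := by
    intro y
    have h1 : e (e.symm (Homeomorph.setCongr hrange.symm y))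
        = Homeomorph.setCongr hrange.symm y :=
      e.apply_symm_apply _
    have h2 := congrArg Subtype.val h1
    have h3 : s ((ψ y : Xh)) = (y : X) := h2
    simp only [hg_def, ← h3]
    exact congrArg f (Function.leftInverse_invFun hbij.1 _)
  set gM : C(↥(XM M), ℝ) :=
    ⟨fun y => f ((ψ y : Xh)), hf.comp (continuous_subtype_val.comp hψc)⟩ with hgM
  obtain ⟨G, hG⟩ := gM.exists_restrict_eq (hclosed M)
  set G' : X → ℝ := fun x => max (-C) (min C (G x)) with hG'_def
  have hG'c : Continuous G' := continuous_const.max (continuous_const.min G.continuous)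
  have hG'b : ∀ x, |G' x| ≤ C := by
    intro x
    rw [abs_le]
    exact ⟨le_max_left _ _, max_le (by linarith) (min_le_left _ _)⟩
  have hG'eq : ∀ x ∈ XM M, G' x = g x := by
    intro x hx
    have h1 : G x = gM ⟨x, hx⟩ := DFunLike.congr_fun hG ⟨x, hx⟩
    have h2 : gM ⟨x, hx⟩ = g x := (hψ ⟨x, hx⟩).symm
    have hb := abs_le.mp (hgb x)
    rw [hG'_def]
    simp only [h1, h2]
    rw [min_eq_right hb.2, max_eq_right hb.1]
  have hG'int : ∀ (ν : Measure X) [IsProbabilityMeasure ν], Integrable G' ν := by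
    intro ν _
    exact (integrable_const C).mono' hG'c.stronglyMeasurable.aestronglyMeasurable
      (Eventually.of_forall fun x => by simpa [Real.norm_eq_abs] using hG'b x)
  -- the key estimate
  have est : ∀ (ν : Measure X) [IsProbabilityMeasure ν], 1 - ε ≤ (ν (XM M)).toReal →
      |∫ x, g x ∂ν - ∫ x, G' x ∂ν| ≤ 2 * C * ε := by
    intro ν _ hν
    have hmeasM : MeasurableSet (XM M) := (hclosed M).measurableSet
    have hint : Integrable (fun x => g x - G' x) ν := (hgint ν).sub (hG'int ν)
    have hsplit : (∫ x in XM M, (g x - G' x) ∂ν) + ∫ x in (XM M)ᶜ, (g x - G' x) ∂ν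
        = ∫ x, (g x - G' x) ∂ν := integral_add_compl hmeasM hint
    have h0 : ∫ x in XM M, (g x - G' x) ∂ν = 0 :=
      setIntegral_eq_zero_of_forall_eq_zero fun x hx => by rw [hG'eq x hx]; ring
    have hbound : ‖∫ x in (XM M)ᶜ, (g x - G' x) ∂ν‖ ≤ (2 * C) * (ν (XM M)ᶜ).toReal := by
      apply norm_setIntegral_le_of_norm_le_const (measure_lt_top ν _)
      intro x _
      have h1 := abs_le.mp (hgb x)
      have h2 := abs_le.mp (hG'b x)
      rw [Real.norm_eq_abs, abs_le]
      constructor <;> linarith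
    have hcompl : (ν (XM M)ᶜ).toReal ≤ ε := by
      have h1 : ν (XM M)ᶜ = 1 - ν (XM M) := prob_compl_eq_one_sub hmeasM
      have h2 : (ν (XM M)ᶜ).toReal = 1 - (ν (XM M)).toReal := by
        rw [h1, ENNReal.toReal_sub_of_le prob_le_one ENNReal.one_ne_top, ENNReal.toReal_one]
      linarith [h2, hν]
    have hdiff : ∫ x, g x ∂ν - ∫ x, G' x ∂ν = ∫ x, (g x - G' x) ∂ν :=
      (integral_sub (hgint ν) (hG'int ν)).symm
    calc |∫ x, g x ∂ν - ∫ x, G' x ∂ν| = |∫ x in (XM M)ᶜ, (g x - G' x) ∂ν| := by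
          rw [hdiff, ← hsplit, h0, zero_add]
      _ ≤ (2 * C) * (ν (XM M)ᶜ).toReal := hbound
      _ ≤ 2 * C * ε := by
          apply mul_le_mul_of_nonneg_left hcompl (by linarith)
  -- conclude
  have htend := hweak G' hG'c ⟨C, hG'b⟩
  obtain ⟨N, hN⟩ := Metric.tendsto_atTop.mp htend ε hε
  refine ⟨N, fun n hn => ?_⟩
  have h1 : |∫ x, g x ∂(μs n) - ∫ x, G' x ∂(μs n)| ≤ 2 * C * ε := est (μs n) (hMi n).le
  have h2 : |∫ x, g x ∂μ - ∫ x, G' x ∂μ| ≤ 2 * C * ε := est μ hMμ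
  have h3 : |∫ x, G' x ∂(μs n) - ∫ x, G' x ∂μ| < ε := by
    have := hN n hn
    rwa [Real.dist_eq] at this
  have hε₀eq : ε₀ = (4 * C + 2) * ε := by
    rw [hε_def]; field_simp
  rw [Real.dist_eq]
  have htri : |∫ x, g x ∂(μs n) - ∫ x, g x ∂μ|
      ≤ |∫ x, g x ∂(μs n) - ∫ x, G' x ∂(μs n)| + |∫ x, G' x ∂(μs n) - ∫ x, G' x ∂μ|
        + |∫ x, G' x ∂μ - ∫ x, g x ∂μ| := by
    calc |∫ x, g x ∂(μs n) - ∫ x, g x ∂μ|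
        ≤ |∫ x, g x ∂(μs n) - ∫ x, G' x ∂(μs n)| + |∫ x, G' x ∂(μs n) - ∫ x, g x ∂μ| :=
          abs_sub_le _ _ _
      _ ≤ |∫ x, g x ∂(μs n) - ∫ x, G' x ∂(μs n)|
          + (|∫ x, G' x ∂(μs n) - ∫ x, G' x ∂μ| + |∫ x, G' x ∂μ - ∫ x, g x ∂μ|) :=
          add_le_add_right (abs_sub_le _ _ _) _
      _ = _ := by ring
  have h2' : |∫ x, G' x ∂μ - ∫ x, g x ∂μ| ≤ 2 * C * ε := by rwa [abs_sub_comm]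
  have : |∫ x, g x ∂(μs n) - ∫ x, g x ∂μ| < (4 * C + 1) * ε := by
    calc |∫ x, g x ∂(μs n) - ∫ x, g x ∂μ| ≤ _ := htri
      _ < 2 * C * ε + ε + 2 * C * ε := by linarith
      _ = (4 * C + 1) * ε := by ring
  calc |∫ x, g x ∂(μs n) - ∫ x, g x ∂μ| < (4 * C + 1) * ε := this
    _ < (4 * C + 2) * ε := by nlinarith
    _ = ε₀ := hε₀eq.symm
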